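/- arXiv:1104.2696 — 5 statements merged into one kernel-verified Lean document; each statement's English description precedes it below -/
import Mathlib

section
/- Let F be a fusion system on a finite group S, let K be a strongly F-closed subgroup of S, and let Ω' be a left F|_K-stable K-K-biset, where F|_K denotes the fusion system on K whose morphisms are the morphisms of F between subgroups of K. Then the S-S-biset Ω = S ×_K Ω' ×_K S is left F-stable. -/
/-- The conjugation homomorphism `P → Q` induced by `s ∈ S`, when `s P s⁻¹ ≤ Q`. -/
def conjMap {S : Type*} [Group S] (s : S) (P Q : Subgroup S)
    (h : ∀ p ∈ P, s * p * s⁻¹ ∈ Q) : ↥P →* ↥Q where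
  toFun p := ⟨s * ↑p * s⁻¹, h ↑p p.2⟩
  map_one' := by ext; simp
  map_mul' p q := by ext; simp [mul_assoc]

/-- A fusion system on a group `S`: a set of injective homomorphisms between each pair of
subgroups, containing all conjugations, closed under composition, corestriction to the image,
and inverses of the induced isomorphisms. -/
structure FusionSystem (S : Type*) [Group S] where
  Hom : ∀ P Q : Subgroup S, Set (↥P →* ↥Q)
  injective : ∀ {P Q : Subgroup S} {φ : ↥P →* ↥Q}, φ ∈ Hom P Q → Function.Injective φ
  conj_mem : ∀ (s : S) (P Q : Subgroup S) (h : ∀ p ∈ P, s * p * s⁻¹ ∈ Q),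
    conjMap s P Q h ∈ Hom P Q
  comp_mem : ∀ {P Q R : Subgroup S} {φ : ↥P →* ↥Q} {ψ : ↥Q →* ↥R},
    φ ∈ Hom P Q → ψ ∈ Hom Q R → ψ.comp φ ∈ Hom P R
  restrict_mem : ∀ {P Q : Subgroup S} {φ : ↥P →* ↥Q}, φ ∈ Hom P Q →
    ∃ φ' ∈ Hom P (Q.subtype.comp φ).range, ∀ p : ↥P, (↑(φ' p) : S) = ↑(φ p)
  inv_mem : ∀ {P Q : Subgroup S} {φ : ↥P →* ↥Q}, φ ∈ Hom P Q →
    ∃ ψ ∈ Hom (Q.subtype.comp φ).range P, ∀ p : ↥P, ψ ⟨↑(φ p), ⟨p, rfl⟩⟩ = p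

/-- A subgroup `K ≤ S` is strongly `F`-closed if every `F`-morphism from a subgroup of `K`
to `S` has image contained in `K`. -/
def FusionSystem.StronglyClosed {S : Type*} [Group S] (F : FusionSystem S)
    (K : Subgroup S) : Prop :=
  ∀ (L : Subgroup S), L ≤ K → ∀ φ ∈ F.Hom L ⊤, ∀ l : ↥L, (↑(φ l) : S) ∈ K

/-- An `S`-`S`-biset structure on a type `Ω`: commuting left and right `S`-actions. -/
structure Biset (S : Type*) [Group S] (Ω : Type*) where
  smul : S → Ω → Ω
  rsmul : Ω → S → Ω
  one_smul : ∀ x, smul 1 x = x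
  mul_smul : ∀ s t x, smul (s * t) x = smul s (smul t x)
  rsmul_one : ∀ x, rsmul x 1 = x
  rsmul_mul : ∀ x s t, rsmul x (s * t) = rsmul (rsmul x s) t
  smul_rsmul : ∀ s x t, rsmul (smul s x) t = smul s (rsmul x t)

/-- The left action of a biset is free. -/
def Biset.LeftFree {S : Type*} [Group S] {Ω : Type*} (B : Biset S Ω) : Prop :=
  ∀ s x, B.smul s x = x → s = 1

/-- A left free biset `Ω` is left `F`-stable if for every subgroup `Q ≤ S` and every
`φ ∈ Hom_F(Q,S)`, the `Q`-`S`-bisets `_Q Ω` and `_φ Ω` are isomorphic, i.e. there is a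
bijection `f` with `f (q • x • s) = φ(q) • f x • s`. -/
def Biset.LeftFStable {S : Type*} [Group S] {Ω : Type*} (B : Biset S Ω)
    (F : FusionSystem S) : Prop :=
  B.LeftFree ∧
    ∀ (Q : Subgroup S), ∀ φ ∈ F.Hom Q ⊤, ∃ f : Ω ≃ Ω,
      ∀ (q : ↥Q) (x : Ω) (s : S),
        f (B.rsmul (B.smul ↑q x) s) = B.rsmul (B.smul ↑(φ q) (f x)) s

/-- The relation on `S × Ω' × S` whose equivalence closure defines the amalgamated product
`S ×_K Ω' ×_K S`: `(sk, x, t) ~ (s, k • x, t)` and `(s, x • k, t) ~ (s, x, kt)` for `k ∈ K`. -/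
def amalgRel {S : Type*} [Group S] (K : Subgroup S) {Ω' : Type*} (B' : Biset ↥K Ω') :
    (S × Ω' × S) → (S × Ω' × S) → Prop := fun a b =>
  (∃ (s t : S) (k : ↥K) (x : Ω'), a = (s * ↑k, x, t) ∧ b = (s, B'.smul k x, t)) ∨
    (∃ (s t : S) (k : ↥K) (x : Ω'), a = (s, B'.rsmul x k, t) ∧ b = (s, x, ↑k * t))

namespace AmalgAux

variable {S : Type*} [Group S]

section Rel2

variable (K : Subgroup S) {Ω' : Type*} (B' : Biset ↥K Ω')

/-- The explicit equivalence relation generated by `amalgRel`. -/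
def rel2 : (S × Ω' × S) → (S × Ω' × S) → Prop := fun p q =>
  ∃ (k l : ↥K), q.1 = p.1 * (↑k)⁻¹ ∧ q.2.1 = B'.rsmul (B'.smul k p.2.1) l ∧
    q.2.2 = (↑l)⁻¹ * p.2.2

lemma rel2_refl (p : S × Ω' × S) : rel2 K B' p p :=
  ⟨1, 1, by simp, by rw [B'.one_smul, B'.rsmul_one], by simp⟩

lemma rel2_symm {p q : S × Ω' × S} (h : rel2 K B' p q) : rel2 K B' q p := by
  obtain ⟨k, l, h1, h2, h3⟩ := h
  refine ⟨k⁻¹, l⁻¹, ?_, ?_, ?_⟩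
  · rw [h1]; simp
  · rw [h2, ← B'.smul_rsmul, ← B'.mul_smul, inv_mul_cancel, B'.one_smul, ← B'.rsmul_mul,
      mul_inv_cancel, B'.rsmul_one]
  · rw [h3]; simp

lemma rel2_trans {p q r : S × Ω' × S} (h : rel2 K B' p q) (h' : rel2 K B' q r) :
    rel2 K B' p r := by
  obtain ⟨k1, l1, h1, h2, h3⟩ := h
  obtain ⟨k2, l2, h1', h2', h3'⟩ := h'
  refine ⟨k2 * k1, l1 * l2, ?_, ?_, ?_⟩
  · rw [h1', h1]; simp [mul_assoc]
  · rw [h2', h2, ← B'.smul_rsmul, ← B'.mul_smul, ← B'.rsmul_mul]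
  · rw [h3', h3]; simp [mul_assoc]

lemma rel2_of_amalgRel {p q : S × Ω' × S} (h : amalgRel K B' p q) : rel2 K B' p q := by
  rcases h with ⟨s, t, k, x, rfl, rfl⟩ | ⟨s, t, k, x, rfl, rfl⟩
  · exact ⟨k, 1, by simp, by rw [B'.rsmul_one], by simp⟩
  · refine ⟨1, k⁻¹, by simp, ?_, by simp⟩
    rw [B'.one_smul, ← B'.rsmul_mul]
    simp [B'.rsmul_one]

lemma quot_eq_iff (p q : S × Ω' × S) :
    Quot.mk (amalgRel K B') p = Quot.mk (amalgRel K B') q ↔ rel2 K B' p q := by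
  rw [Quot.eq]
  constructor
  · intro h
    induction h with
    | rel _ _ h => exact rel2_of_amalgRel K B' h
    | refl _ => exact rel2_refl K B' _
    | symm _ _ _ ih => exact rel2_symm K B' ih
    | trans _ _ _ _ _ ih1 ih2 => exact rel2_trans K B' ih1 ih2
  · intro h
    obtain ⟨a, x, t⟩ := p
    obtain ⟨b, y, r⟩ := q
    obtain ⟨k, l, h1, h2, h3⟩ := h
    dsimp at h1 h2 h3
    subst h1; subst h2; subst h3
    have step1 : amalgRel K B' (a, x, t) (a * (↑k)⁻¹, B'.smul k x, t) :=
      Or.inl ⟨a * (↑k)⁻¹, t, k, x, by simp, rfl⟩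
    have step2 : amalgRel K B' (a * (↑k)⁻¹, B'.rsmul (B'.smul k x) l, (↑l)⁻¹ * t)
        (a * (↑k)⁻¹, B'.smul k x, t) := by
      refine Or.inr ⟨a * (↑k)⁻¹, (↑l)⁻¹ * t, l, B'.smul k x, rfl, ?_⟩
      simp
    exact .trans _ _ _ (.rel _ _ step1) (.symm _ _ (.rel _ _ step2))

/-- The `S`-`S`-biset structure on `S ×_K Ω' ×_K S`. -/
def amalgBiset : Biset S (Quot (amalgRel K B')) where
  smul u := Quot.lift (fun p => Quot.mk _ (u * p.1, p.2.1, p.2.2)) (by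
    rintro p p' h
    apply Quot.sound
    rcases h with ⟨s, t', k, x', rfl, rfl⟩ | ⟨s, t', k, x', rfl, rfl⟩
    · exact Or.inl ⟨u * s, t', k, x', by simp [mul_assoc], rfl⟩
    · exact Or.inr ⟨u * s, t', k, x', rfl, rfl⟩)
  rsmul p u := Quot.lift (fun p => Quot.mk _ (p.1, p.2.1, p.2.2 * u)) (by
    rintro p1 p2 h
    apply Quot.sound
    rcases h with ⟨s, t', k, x', rfl, rfl⟩ | ⟨s, t', k, x', rfl, rfl⟩
    · exact Or.inl ⟨s, t' * u, k, x', rfl, rfl⟩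
    · exact Or.inr ⟨s, t' * u, k, x', rfl, by simp [mul_assoc]⟩) p
  one_smul p := by
    induction p using Quot.ind with
    | _ p => simp only [Quot.lift, one_mul]
  mul_smul s t p := by
    induction p using Quot.ind with
    | _ p => simp only [Quot.lift, mul_assoc]
  rsmul_one p := by
    induction p using Quot.ind with
    | _ p => simp only [Quot.lift, mul_one]
  rsmul_mul p s t := by
    induction p using Quot.ind with
    | _ p => simp only [Quot.lift, mul_assoc]
  smul_rsmul s p t := by
    induction p using Quot.ind with
    | _ p => rfl

@[simp] lemma amalgBiset_smul (u a t : S) (x : Ω') :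
    (amalgBiset K B').smul u (Quot.mk _ (a, x, t)) = Quot.mk _ (u * a, x, t) := rfl

@[simp] lemma amalgBiset_rsmul (a t u : S) (x : Ω') :
    (amalgBiset K B').rsmul (Quot.mk _ (a, x, t)) u = Quot.mk _ (a, x, t * u) := rfl

lemma amalgBiset_leftFree (hfree' : ∀ (k : ↥K) (x : Ω'), B'.smul k x = x → k = 1) :
    (amalgBiset K B').LeftFree := by
  intro u p hp
  induction p using Quot.ind with
  | _ p =>
    obtain ⟨a, x, t⟩ := p
    rw [amalgBiset_smul, quot_eq_iff] at hp
    obtain ⟨k, l, h1, h2, h3⟩ := hp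
    dsimp at h1 h2 h3
    have hl : l = 1 := by
      have hl1 : ((↑l : S))⁻¹ = 1 := right_eq_mul.mp h3
      exact Subtype.ext (by simpa using congrArg (·⁻¹) hl1)
    subst hl
    rw [B'.rsmul_one] at h2
    have hk : k = 1 := hfree' k x h2.symm
    subst hk
    simp only [OneMemClass.coe_one, inv_one, mul_one] at h1
    have h1' : a = u * a := h1
    exact (right_eq_mul.mp h1')

end Rel2

end AmalgAux

namespace AmalgAux

variable {S : Type*} [Group S]

section Fusion

variable (F : FusionSystem S) (K : Subgroup S)

lemma conj_mem_of_sc (hK : F.StronglyClosed K) (g x : S) (hx : x ∈ K) :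
    g * x * g⁻¹ ∈ K := by
  have h1 : ∀ p ∈ K, g * p * g⁻¹ ∈ (⊤ : Subgroup S) := fun _ _ => trivial
  have h2 := hK K le_rfl (conjMap g K ⊤ h1) (F.conj_mem g K ⊤ h1) ⟨x, hx⟩
  simpa [conjMap] using h2

variable {Q : Subgroup S} {φ : ↥Q →* ↥(⊤ : Subgroup S)}

lemma phi_mem_K (hK : F.StronglyClosed K) (hφ : φ ∈ F.Hom Q ⊤)
    (q : ↥Q) (hq : (↑q : S) ∈ K) : (↑(φ q) : S) ∈ K := by
  set L := Q ⊓ K with hL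
  have hι : ∀ p ∈ L, (1 : S) * p * (1 : S)⁻¹ ∈ Q := by
    intro p hp; simpa using hp.1
  have hχ : φ.comp (conjMap 1 L Q hι) ∈ F.Hom L ⊤ :=
    F.comp_mem (F.conj_mem 1 L Q hι) hφ
  have h2 := hK L inf_le_right _ hχ ⟨↑q, ⟨q.2, hq⟩⟩
  have h3 : conjMap 1 L Q hι ⟨↑q, ⟨q.2, hq⟩⟩ = q := Subtype.ext (by simp [conjMap])
  rw [MonoidHom.comp_apply, h3] at h2
  exact h2

lemma phi_inv_mem_K (hK : F.StronglyClosed K) (hφ : φ ∈ F.Hom Q ⊤)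
    (q : ↥Q) (hq : (↑(φ q) : S) ∈ K) : (↑q : S) ∈ K := by
  obtain ⟨ψ, hψF, hψ⟩ := F.inv_mem hφ
  have hι : ∀ p ∈ ((⊤ : Subgroup S).subtype.comp φ).range ⊓ K,
      (1 : S) * p * (1 : S)⁻¹ ∈ ((⊤ : Subgroup S).subtype.comp φ).range := by
    intro p hp; simpa using hp.1
  have hι2 : ∀ p ∈ Q, (1 : S) * p * (1 : S)⁻¹ ∈ (⊤ : Subgroup S) := fun _ _ => trivial
  have hχF : (conjMap 1 Q ⊤ hι2).comp (ψ.comp (conjMap 1 _ _ hι)) ∈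
      F.Hom (((⊤ : Subgroup S).subtype.comp φ).range ⊓ K) ⊤ :=
    F.comp_mem (F.comp_mem (F.conj_mem 1 _ _ hι) hψF) (F.conj_mem 1 Q ⊤ hι2)
  have hmem : (↑(φ q) : S) ∈ ((⊤ : Subgroup S).subtype.comp φ).range := ⟨q, rfl⟩
  have h2 := hK _ inf_le_right _ hχF ⟨↑(φ q), ⟨hmem, hq⟩⟩
  have h3 : conjMap 1 _ _ hι ⟨↑(φ q), ⟨hmem, hq⟩⟩ = ⟨↑(φ q), ⟨q, rfl⟩⟩ :=
    Subtype.ext (by simp [conjMap])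
  rw [MonoidHom.comp_apply, MonoidHom.comp_apply, h3, hψ] at h2
  simpa [conjMap] using h2

/-- The subgroup `c⁻¹ (Q ⊓ K) c`. -/
def LL (Q K : Subgroup S) (c : S) : Subgroup S :=
  (Q ⊓ K).comap (MulAut.conj c).toMonoidHom

lemma LL_mem_QK {Q K : Subgroup S} {c : S} {x : S} (hx : x ∈ LL Q K c) :
    c * x * c⁻¹ ∈ Q ⊓ K := by
  have := Subgroup.mem_comap.mp hx
  simpa [MulAut.conj_apply] using this

lemma mem_LL {Q K : Subgroup S} {c : S} {x : S} (hx : c * x * c⁻¹ ∈ Q ⊓ K) :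
    x ∈ LL Q K c := by
  rw [LL, Subgroup.mem_comap]
  simpa [MulAut.conj_apply] using hx

lemma LL_le_K (hK : F.StronglyClosed K) (Q : Subgroup S) (c : S) : LL Q K c ≤ K := by
  intro x hx
  have h2 : c * x * c⁻¹ ∈ K := (LL_mem_QK hx).2
  have h3 := conj_mem_of_sc F K hK c⁻¹ _ h2
  simpa [mul_assoc] using h3

lemma mu_exists (hK : F.StronglyClosed K) (hφ : φ ∈ F.Hom Q ⊤) (c c' : S) :
    ∃ μ ∈ F.Hom (LL Q K c) K, ∀ l : ↥(LL Q K c),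
      (↑(μ l) : S) = c'⁻¹ * ↑(φ ⟨c * ↑l * c⁻¹, (LL_mem_QK l.2).1⟩) * c' := by
  have h₁ : ∀ p ∈ LL Q K c, c * p * c⁻¹ ∈ Q := fun p hp => (LL_mem_QK hp).1
  have hχ₁ : conjMap c (LL Q K c) Q h₁ ∈ F.Hom (LL Q K c) Q := F.conj_mem _ _ _ h₁
  have hχ₂ : φ.comp (conjMap c (LL Q K c) Q h₁) ∈ F.Hom (LL Q K c) ⊤ :=
    F.comp_mem hχ₁ hφ
  have h₃ : ∀ p ∈ (⊤ : Subgroup S), c'⁻¹ * p * (c'⁻¹)⁻¹ ∈ (⊤ : Subgroup S) :=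
    fun _ _ => trivial
  set χ₃ := (conjMap c'⁻¹ ⊤ ⊤ h₃).comp (φ.comp (conjMap c (LL Q K c) Q h₁)) with hχ₃def
  have hχ₃ : χ₃ ∈ F.Hom (LL Q K c) ⊤ := F.comp_mem hχ₂ (F.conj_mem c'⁻¹ ⊤ ⊤ h₃)
  have hχ₃val : ∀ l : ↥(LL Q K c),
      (↑(χ₃ l) : S) = c'⁻¹ * ↑(φ ⟨c * ↑l * c⁻¹, (LL_mem_QK l.2).1⟩) * c' := by
    intro l
    simp only [hχ₃def, MonoidHom.comp_apply, conjMap, MonoidHom.coe_mk, OneHom.coe_mk,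
      inv_inv]
  obtain ⟨χ₄, hχ₄F, hχ₄⟩ := F.restrict_mem hχ₃
  have hR₄K : ((⊤ : Subgroup S).subtype.comp χ₃).range ≤ K := by
    rintro _ ⟨l, rfl⟩
    have h5 : ((⊤ : Subgroup S).subtype.comp χ₃) l = (↑(χ₃ l) : S) := rfl
    rw [h5, hχ₃val l]
    have h6 : (↑(φ ⟨c * ↑l * c⁻¹, (LL_mem_QK l.2).1⟩) : S) ∈ K :=
      phi_mem_K F K hK hφ _ (LL_mem_QK l.2).2
    have h7 := conj_mem_of_sc F K hK c'⁻¹ _ h6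
    simpa [mul_assoc] using h7
  have hι : ∀ p ∈ ((⊤ : Subgroup S).subtype.comp χ₃).range, (1 : S) * p * (1 : S)⁻¹ ∈ K := by
    intro p hp; simpa using hR₄K hp
  refine ⟨(conjMap 1 _ K hι).comp χ₄, F.comp_mem hχ₄F (F.conj_mem 1 _ K hι), ?_⟩
  intro l
  have : (↑((conjMap 1 _ K hι).comp χ₄ l) : S) = ↑(χ₄ l) := by simp [conjMap]
  rw [this, hχ₄ l, hχ₃val l]

end Fusion

end AmalgAux

namespace AmalgAux

variable {S : Type*} [Group S]

section Main

variable (F : FusionSystem S) (K : Subgroup S) {Ω' : Type*} (B' : Biset ↥K Ω')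

lemma stable_equiv [Finite S] (hK : F.StronglyClosed K)
    (hstable' : ∀ (Q : Subgroup S) (hQ : Q ≤ K), ∀ φ ∈ F.Hom Q K, ∃ f : Ω' ≃ Ω',
      ∀ (q : ↥Q) (x : Ω') (k : ↥K),
        f (B'.rsmul (B'.smul ⟨↑q, hQ q.2⟩ x) k) = B'.rsmul (B'.smul (φ q) (f x)) k)
    (Q : Subgroup S) (φ : ↥Q →* ↥(⊤ : Subgroup S)) (hφ : φ ∈ F.Hom Q ⊤) :
    ∃ f : Quot (amalgRel K B') ≃ Quot (amalgRel K B'),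
      ∀ (q : ↥Q) (x : Quot (amalgRel K B')) (s : S),
        f ((amalgBiset K B').rsmul ((amalgBiset K B').smul ↑q x) s) =
          (amalgBiset K B').rsmul ((amalgBiset K B').smul ↑(φ q) (f x)) s := by
  classical
  haveI hN : K.Normal := ⟨fun n hn g => conj_mem_of_sc F K hK g n hn⟩
  set π : S →* S ⧸ K := QuotientGroup.mk' K with hπdef
  set α : ↥Q →* S ⧸ K := π.comp Q.subtype with hαdef
  set βm : ↥Q →* S ⧸ K := π.comp ((⊤ : Subgroup S).subtype.comp φ) with hβdef
  have hπq : ∀ q : ↥Q, π ↑q = α q := fun q => rfl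
  have hπφ : ∀ q : ↥Q, π ↑(φ q) = βm q := fun q => rfl
  have hπ1 : ∀ x : S, π x = 1 ↔ x ∈ K := fun x => QuotientGroup.eq_one_iff x
  have hπK : ∀ (a : S) (k : ↥K), π (a * ↑k) = π a := by
    intro a k
    rw [map_mul, (hπ1 ↑k).mpr k.2, mul_one]
  have hker : α.ker = βm.ker := by
    ext q
    simp only [MonoidHom.mem_ker]
    rw [← hπq, ← hπφ, hπ1, hπ1]
    exact ⟨fun h => phi_mem_K F K hK hφ q h, fun h => phi_inv_mem_K F K hK hφ q h⟩
  haveI : Finite (S ⧸ K) := Quotient.finite _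
  -- the bijection between the two double-coset spaces
  have hcard : Nat.card (Quotient (QuotientGroup.rightRel α.range)) =
      Nat.card (Quotient (QuotientGroup.rightRel βm.range)) := by
    have e1 := Nat.card_congr (QuotientGroup.quotientRightRelEquivQuotientLeftRel α.range)
    have e2 := Nat.card_congr (QuotientGroup.quotientRightRelEquivQuotientLeftRel βm.range)
    have g1 := Subgroup.card_eq_card_quotient_mul_card_subgroup α.range
    have g2 := Subgroup.card_eq_card_quotient_mul_card_subgroup βm.range
    have hAB : Nat.card α.range = Nat.card βm.range := by
      have e3 := Nat.card_congr (QuotientGroup.quotientKerEquivRange α).toEquiv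
      have e4 := Nat.card_congr (QuotientGroup.quotientKerEquivRange βm).toEquiv
      rw [hker] at e3
      rw [← e3, ← e4]
    have hpos : 0 < Nat.card βm.range := Nat.card_pos
    rw [e1, e2]
    refine Nat.eq_of_mul_eq_mul_right hpos ?_
    rw [← hAB] at g2 ⊢
    exact g1.symm.trans g2
  have hjex : Nonempty ((Quotient (QuotientGroup.rightRel α.range)) ≃
      (Quotient (QuotientGroup.rightRel βm.range))) := by
    haveI := Fintype.ofFinite (Quotient (QuotientGroup.rightRel α.range))
    haveI := Fintype.ofFinite (Quotient (QuotientGroup.rightRel βm.range))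
    exact ⟨Fintype.equivOfCardEq (by
      rw [← Nat.card_eq_fintype_card, ← Nat.card_eq_fintype_card]; exact hcard)⟩
  obtain ⟨j⟩ := hjex
  set qA : S ⧸ K → Quotient (QuotientGroup.rightRel α.range) :=
    fun g => Quotient.mk _ g with hqAdef
  set qB : S ⧸ K → Quotient (QuotientGroup.rightRel βm.range) :=
    fun g => Quotient.mk _ g with hqBdef
  have hqA_left : ∀ (q : ↥Q) (g : S ⧸ K), qA (α q * g) = qA g := by
    intro q g
    apply Quotient.sound
    refine QuotientGroup.rightRel_apply.mpr ⟨q⁻¹, ?_⟩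
    rw [map_inv]
    group
  have hqB_left : ∀ (q : ↥Q) (g : S ⧸ K), qB (βm q * g) = qB g := by
    intro q g
    apply Quotient.sound
    refine QuotientGroup.rightRel_apply.mpr ⟨q⁻¹, ?_⟩
    rw [map_inv]
    group
  have hout : ∀ g : S ⧸ K, π g.out = g := by
    intro g
    rw [hπdef, QuotientGroup.mk'_apply]
    exact QuotientGroup.out_eq' g
  set Cc : Quotient (QuotientGroup.rightRel α.range) → S := fun ω => ω.out.out with hCcdef
  set Cc' : Quotient (QuotientGroup.rightRel α.range) → S := fun ω => (j ω).out.out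
    with hCc'def
  have hCc : ∀ ω, qA (π (Cc ω)) = ω := by
    intro ω
    rw [hCcdef]
    show qA (π ω.out.out) = ω
    rw [hout]
    exact Quotient.out_eq ω
  have hCc' : ∀ ω, qB (π (Cc' ω)) = j ω := by
    intro ω
    rw [hCc'def]
    show qB (π (j ω).out.out) = j ω
    rw [hout]
    exact Quotient.out_eq _
  -- decomposition a = q ⬝ C(ω_a) ⬝ k
  have hdec : ∀ a : S, ∃ (q : ↥Q) (k : ↥K), a = ↑q * Cc (qA (π a)) * ↑k := by
    intro a
    have h1 : qA (π (Cc (qA (π a)))) = qA (π a) := hCc _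
    have h2 := QuotientGroup.rightRel_apply.mp (Quotient.exact h1)
    obtain ⟨q, hq⟩ := h2
    have hkmem : (Cc (qA (π a)))⁻¹ * (↑q)⁻¹ * a ∈ K := by
      rw [← hπ1]
      rw [map_mul, map_mul, map_inv, map_inv, hπq, hq]
      group
    refine ⟨q, ⟨(Cc (qA (π a)))⁻¹ * (↑q)⁻¹ * a, hkmem⟩, ?_⟩
    show a = ↑q * Cc (qA (π a)) * ((Cc (qA (π a)))⁻¹ * (↑q)⁻¹ * a)
    group
  choose qf kf hqk using hdec
  -- the morphisms and equivalences on Ω'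
  have hLK : ∀ ω, LL Q K (Cc ω) ≤ K := fun ω => LL_le_K F K hK Q (Cc ω)
  have hμx : ∀ ω, ∃ μ ∈ F.Hom (LL Q K (Cc ω)) K, ∀ l : ↥(LL Q K (Cc ω)),
      (↑(μ l) : S) = (Cc' ω)⁻¹ * ↑(φ ⟨Cc ω * ↑l * (Cc ω)⁻¹, (LL_mem_QK l.2).1⟩) * Cc' ω :=
    fun ω => mu_exists F K hK hφ (Cc ω) (Cc' ω)
  choose μf hμF hμv using hμx
  have hfx : ∀ ω, ∃ f : Ω' ≃ Ω', ∀ (l : ↥(LL Q K (Cc ω))) (x : Ω') (k : ↥K),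
      f (B'.rsmul (B'.smul ⟨↑l, hLK ω l.2⟩ x) k) = B'.rsmul (B'.smul (μf ω l) (f x)) k :=
    fun ω => hstable' _ (hLK ω) (μf ω) (hμF ω)
  choose ff hff using hfx
  have hf_right : ∀ (ω) (y : Ω') (k : ↥K), ff ω (B'.rsmul y k) = B'.rsmul (ff ω y) k := by
    intro ω y k
    have h1 := hff ω 1 y k
    have e1 : (⟨↑(1 : ↥(LL Q K (Cc ω))), hLK ω (1 : ↥(LL Q K (Cc ω))).2⟩ : ↥K) = 1 :=
      Subtype.ext rfl
    rw [e1, B'.one_smul, map_one, B'.one_smul] at h1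
    exact h1
  -- the key well-definedness lemma
  have hW : ∀ (ω) (q₁ q₂ : ↥Q) (k₁ k₂ : ↥K) (x : Ω') (t : S),
      ↑q₁ * Cc ω * ↑k₁ = ↑q₂ * Cc ω * ↑k₂ →
      Quot.mk (amalgRel K B') (↑(φ q₁) * Cc' ω, ff ω (B'.smul k₁ x), t) =
        Quot.mk (amalgRel K B') (↑(φ q₂) * Cc' ω, ff ω (B'.smul k₂ x), t) := by
    intro ω q₁ q₂ k₁ k₂ x t h
    have h2 : (↑q₂ : S) = ↑q₁ * Cc ω * ↑k₁ * (↑k₂)⁻¹ * (Cc ω)⁻¹ := by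
      rw [h]; group
    have hdval : (↑(q₁⁻¹ * q₂) : S) = Cc ω * (↑k₁ * (↑k₂)⁻¹) * (Cc ω)⁻¹ := by
      push_cast
      rw [h2]; group
    have hdK : (↑(q₁⁻¹ * q₂) : S) ∈ K := by
      rw [hdval]
      exact hN.conj_mem _ (K.mul_mem k₁.2 (K.inv_mem k₂.2)) (Cc ω)
    have hl₀mem : (↑k₁ * (↑k₂)⁻¹ : S) ∈ LL Q K (Cc ω) := by
      apply mem_LL
      rw [← hdval]
      exact ⟨(q₁⁻¹ * q₂).2, hdK⟩
    set l₀ : ↥(LL Q K (Cc ω)) := ⟨↑k₁ * (↑k₂)⁻¹, hl₀mem⟩ with hl₀def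
    have hk₁ : (⟨↑l₀, hLK ω l₀.2⟩ : ↥K) * k₂ = k₁ := by
      apply Subtype.ext
      show (↑k₁ * (↑k₂)⁻¹) * ↑k₂ = (↑k₁ : S)
      group
    have hEq : ff ω (B'.smul k₁ x) = B'.smul (μf ω l₀) (ff ω (B'.smul k₂ x)) := by
      have h1 := hff ω l₀ (B'.smul k₂ x) 1
      rw [B'.rsmul_one, B'.rsmul_one, ← B'.mul_smul, hk₁] at h1
      exact h1
    have hμl₀ : (↑(μf ω l₀) : S) = (Cc' ω)⁻¹ * ↑(φ (q₁⁻¹ * q₂)) * Cc' ω := by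
      rw [hμv ω l₀]
      have he : (⟨Cc ω * ↑l₀ * (Cc ω)⁻¹, (LL_mem_QK l₀.2).1⟩ : ↥Q) = q₁⁻¹ * q₂ :=
        Subtype.ext (by
          show Cc ω * (↑k₁ * (↑k₂)⁻¹) * (Cc ω)⁻¹ = (↑(q₁⁻¹ * q₂) : S)
          rw [hdval])
      rw [he]
    have hφmul : (↑(φ q₁) : S) * ↑(φ (q₁⁻¹ * q₂)) = ↑(φ q₂) := by
      rw [← Subgroup.coe_mul, ← map_mul, mul_inv_cancel_left]
    have hsk : (↑(φ q₁) * Cc' ω) * ↑(μf ω l₀) = ↑(φ q₂) * Cc' ω := by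
      rw [hμl₀]
      calc (↑(φ q₁) * Cc' ω) * ((Cc' ω)⁻¹ * ↑(φ (q₁⁻¹ * q₂)) * Cc' ω)
          = (↑(φ q₁) * ↑(φ (q₁⁻¹ * q₂))) * Cc' ω := by group
        _ = ↑(φ q₂) * Cc' ω := by rw [hφmul]
    calc Quot.mk (amalgRel K B') (↑(φ q₁) * Cc' ω, ff ω (B'.smul k₁ x), t)
        = Quot.mk (amalgRel K B')
            (↑(φ q₁) * Cc' ω, B'.smul (μf ω l₀) (ff ω (B'.smul k₂ x)), t) := by rw [hEq]
      _ = Quot.mk (amalgRel K B')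
            ((↑(φ q₁) * Cc' ω) * ↑(μf ω l₀), ff ω (B'.smul k₂ x), t) :=
          (Quot.sound (r := amalgRel K B')
            (Or.inl ⟨↑(φ q₁) * Cc' ω, t, μf ω l₀, ff ω (B'.smul k₂ x), rfl, rfl⟩)).symm
      _ = Quot.mk (amalgRel K B') (↑(φ q₂) * Cc' ω, ff ω (B'.smul k₂ x), t) := by rw [hsk]
  -- the map on triples
  set Nmap : S × Ω' × S → Quot (amalgRel K B') := fun p =>
    Quot.mk (amalgRel K B') (↑(φ (qf p.1)) * Cc' (qA (π p.1)),
      ff (qA (π p.1)) (B'.smul (kf p.1) p.2.1), p.2.2) with hNdef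
  have hresp : ∀ p p', amalgRel K B' p p' → Nmap p = Nmap p' := by
    rintro p p' (⟨s, t', k, x', rfl, rfl⟩ | ⟨s, t', k, x', rfl, rfl⟩)
    · -- (s * k, x', t') ~ (s, k • x', t')
      show Quot.mk _ (↑(φ (qf (s * ↑k))) * Cc' (qA (π (s * ↑k))),
          ff (qA (π (s * ↑k))) (B'.smul (kf (s * ↑k)) x'), t') =
        Quot.mk _ (↑(φ (qf s)) * Cc' (qA (π s)),
          ff (qA (π s)) (B'.smul (kf s) (B'.smul k x')), t')
      have hω : qA (π (s * ↑k)) = qA (π s) := by rw [hπK]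
      rw [hω]
      have h1 := hqk (s * ↑k)
      rw [hω] at h1
      have h2 : ↑(qf s) * Cc (qA (π s)) * ↑(kf s * k) = ↑(qf (s * ↑k)) * Cc (qA (π s)) *
          ↑(kf (s * ↑k)) := by
        rw [← h1]
        push_cast
        rw [← mul_assoc, ← hqk s]
      have h3 := hW (qA (π s)) (qf (s * ↑k)) (qf s) (kf (s * ↑k)) (kf s * k) x' t' h2.symm
      rw [h3, B'.mul_smul]
    · -- (s, x' • k, t') ~ (s, x', k * t')
      show Quot.mk _ (↑(φ (qf s)) * Cc' (qA (π s)),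
          ff (qA (π s)) (B'.smul (kf s) (B'.rsmul x' k)), t') =
        Quot.mk _ (↑(φ (qf s)) * Cc' (qA (π s)),
          ff (qA (π s)) (B'.smul (kf s) x'), ↑k * t')
      rw [← B'.smul_rsmul, hf_right]
      exact Quot.sound (Or.inr ⟨_, t', k, ff (qA (π s)) (B'.smul (kf s) x'), rfl, rfl⟩)
  set Fmap : Quot (amalgRel K B') → Quot (amalgRel K B') := Quot.lift Nmap hresp with hFdef
  have hFmk : ∀ p, Fmap (Quot.mk (amalgRel K B') p) = Nmap p := fun p => rfl
  -- injectivity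
  have hinj : Function.Injective Fmap := by
    intro z₁ z₂ h
    induction z₁ using Quot.ind with
    | _ p₁ =>
    induction z₂ using Quot.ind with
    | _ p₂ =>
    obtain ⟨a₁, x₁, t₁⟩ := p₁
    obtain ⟨a₂, x₂, t₂⟩ := p₂
    rw [hFmk, hFmk, hNdef] at h
    rw [quot_eq_iff] at h
    obtain ⟨k, l, h1, h2, h3⟩ := h
    dsimp only at h1 h2 h3
    -- the two double cosets agree
    have hωeq : qA (π a₂) = qA (π a₁) := by
      apply j.injective
      have hp := congrArg π h1
      rw [map_mul, map_mul, map_mul, hπφ, hπφ] at hp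
      have hk1 : π ((↑k)⁻¹) = 1 := by
        rw [map_inv, (hπ1 ↑k).mpr k.2, inv_one]
      rw [hk1, mul_one] at hp
      have e2 := congrArg qB hp
      rw [hqB_left, hqB_left, hCc', hCc'] at e2
      exact e2
    rw [hωeq] at h1 h2
    set ω := qA (π a₁) with hωdef
    set dd : ↥Q := (qf a₁)⁻¹ * qf a₂ with hdddef
    have h1' : (↑(φ (qf a₂)) : S) = ↑(φ (qf a₁)) * Cc' ω * (↑k)⁻¹ * (Cc' ω)⁻¹ := by
      rw [← h1]; group
    have hφe : (↑(φ (dd⁻¹)) : S) = Cc' ω * ↑k * (Cc' ω)⁻¹ := by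
      have hsplit : (↑(φ (dd⁻¹)) : S) = (↑(φ (qf a₂)))⁻¹ * ↑(φ (qf a₁)) := by
        rw [hdddef]
        rw [mul_inv_rev, inv_inv, map_mul, map_inv, Subgroup.coe_mul]
        rfl
      rw [hsplit, h1']; group
    have heK : (↑(dd⁻¹) : S) ∈ K := by
      refine phi_inv_mem_K F K hK hφ (dd⁻¹) ?_
      rw [hφe]
      exact hN.conj_mem _ k.2 _
    have hval : Cc ω * ((Cc ω)⁻¹ * ↑(dd⁻¹) * Cc ω) * (Cc ω)⁻¹ = (↑(dd⁻¹) : S) := by group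
    have hl₀mem : (Cc ω)⁻¹ * ↑(dd⁻¹) * Cc ω ∈ LL Q K (Cc ω) := by
      apply mem_LL
      rw [hval]
      exact ⟨(dd⁻¹).2, heK⟩
    set l₀ : ↥(LL Q K (Cc ω)) := ⟨(Cc ω)⁻¹ * ↑(dd⁻¹) * Cc ω, hl₀mem⟩ with hl₀def
    have hμk : μf ω l₀ = k := by
      apply Subtype.ext
      rw [hμv ω l₀]
      have he : (⟨Cc ω * ↑l₀ * (Cc ω)⁻¹, (LL_mem_QK l₀.2).1⟩ : ↥Q) = dd⁻¹ :=
        Subtype.ext hval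
      rw [he, hφe]; group
    have hspec := hff ω l₀ (B'.smul (kf a₁) x₁) l
    rw [hμk, ← h2] at hspec
    have hx := (ff ω).injective hspec
    set k' : ↥K := (kf a₂)⁻¹ * ⟨↑l₀, hLK ω l₀.2⟩ * kf a₁ with hk'def
    have hx₂ : x₂ = B'.rsmul (B'.smul k' x₁) l := by
      calc x₂ = B'.smul ((kf a₂)⁻¹ * kf a₂) x₂ := by rw [inv_mul_cancel, B'.one_smul]
        _ = B'.smul (kf a₂)⁻¹ (B'.smul (kf a₂) x₂) := B'.mul_smul _ _ _
        _ = B'.smul (kf a₂)⁻¹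
              (B'.rsmul (B'.smul (⟨↑l₀, hLK ω l₀.2⟩ : ↥K) (B'.smul (kf a₁) x₁)) l) := by
            rw [hx]
        _ = B'.rsmul (B'.smul (kf a₂)⁻¹
              (B'.smul (⟨↑l₀, hLK ω l₀.2⟩ : ↥K) (B'.smul (kf a₁) x₁))) l := by
            simp only [B'.smul_rsmul]
        _ = B'.rsmul (B'.smul k' x₁) l := by
            rw [← B'.mul_smul, ← B'.mul_smul, hk'def, mul_assoc]
    have hddv : (↑(dd⁻¹) : S) = (↑(qf a₂))⁻¹ * ↑(qf a₁) := by
      rw [hdddef, mul_inv_rev, inv_inv, Subgroup.coe_mul]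
      rfl
    have ha : a₂ = a₁ * (↑k')⁻¹ := by
      have hk'val : (↑k' : S) = (↑(kf a₂))⁻¹ * ((Cc ω)⁻¹ * ↑(dd⁻¹) * Cc ω) * ↑(kf a₁) := by
        rw [hk'def]; push_cast; rfl
      have hq1 := hqk a₁
      rw [← hωdef] at hq1
      have hq2 := hqk a₂
      rw [hωeq] at hq2
      rw [hq1, hq2, hk'val, hddv]
      group
    rw [quot_eq_iff]
    exact ⟨k', l, ha, hx₂, h3⟩
  -- surjectivity
  have hsurj : Function.Surjective Fmap := by
    intro z
    induction z using Quot.ind with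
    | _ p =>
    obtain ⟨b, y, t⟩ := p
    set ω := j.symm (qB (π b)) with hωdef
    have hjω : qB (π (Cc' ω)) = qB (π b) := by rw [hCc' ω, hωdef, Equiv.apply_symm_apply]
    have h2 := QuotientGroup.rightRel_apply.mp (Quotient.exact hjω.symm)
    obtain ⟨q, hq⟩ := h2
    have hkmem : (Cc' ω)⁻¹ * (↑(φ (q⁻¹)))⁻¹ * b ∈ K := by
      rw [← hπ1, map_mul, map_mul, map_inv, map_inv, hπφ, map_inv, hq]
      group
    set k₀ : ↥K := ⟨(Cc' ω)⁻¹ * (↑(φ (q⁻¹)))⁻¹ * b, hkmem⟩ with hk₀def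
    have hb : ↑(φ (q⁻¹)) * Cc' ω * ↑k₀ = b := by
      rw [hk₀def]
      show ↑(φ (q⁻¹)) * Cc' ω * ((Cc' ω)⁻¹ * (↑(φ (q⁻¹)))⁻¹ * b) = b
      group
    set a₀ : S := ↑(q⁻¹ : ↥Q) * Cc ω with ha₀def
    have hωa₀ : qA (π a₀) = ω := by
      rw [ha₀def, map_mul, hπq, hqA_left, hCc]
    set x₀ : Ω' := (ff ω).symm (B'.smul k₀ y) with hx₀def
    refine ⟨Quot.mk _ (a₀, x₀, t), ?_⟩
    rw [hFmk, hNdef]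
    dsimp only
    rw [hωa₀]
    have hq0 := hqk a₀
    rw [hωa₀] at hq0
    have hdecb : ↑(qf a₀) * Cc ω * ↑(kf a₀) = ↑(q⁻¹ : ↥Q) * Cc ω * ↑(1 : ↥K) := by
      rw [← hq0, ha₀def]
      simp
    have h3 := hW ω (qf a₀) (q⁻¹) (kf a₀) 1 x₀ t hdecb
    rw [h3, B'.one_smul, hx₀def, Equiv.apply_symm_apply]
    calc Quot.mk (amalgRel K B') (↑(φ q⁻¹) * Cc' ω, B'.smul k₀ y, t)
        = Quot.mk (amalgRel K B') (↑(φ q⁻¹) * Cc' ω * ↑k₀, y, t) :=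
          (Quot.sound (r := amalgRel K B')
            (Or.inl ⟨↑(φ q⁻¹) * Cc' ω, t, k₀, y, rfl, rfl⟩)).symm
      _ = Quot.mk (amalgRel K B') (b, y, t) := by rw [hb]
  -- equivariance
  have hprop : ∀ (q : ↥Q) (z : Quot (amalgRel K B')) (s : S),
      Fmap ((amalgBiset K B').rsmul ((amalgBiset K B').smul ↑q z) s) =
        (amalgBiset K B').rsmul ((amalgBiset K B').smul ↑(φ q) (Fmap z)) s := by
    intro q z s
    induction z using Quot.ind with
    | _ p =>
    obtain ⟨a, x, t⟩ := p
    rw [amalgBiset_smul, amalgBiset_rsmul, hFmk, hFmk, hNdef]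
    dsimp only
    rw [amalgBiset_smul, amalgBiset_rsmul]
    have hω : qA (π (↑q * a)) = qA (π a) := by
      rw [map_mul, hπq, hqA_left]
    rw [hω]
    have hq1 := hqk (↑q * a)
    rw [hω] at hq1
    have hdeceq : ↑(qf (↑q * a)) * Cc (qA (π a)) * ↑(kf (↑q * a)) =
        ↑(q * qf a) * Cc (qA (π a)) * ↑(kf a) := by
      rw [← hq1, Subgroup.coe_mul]
      conv_lhs => rw [hqk a]
      group
    have h3 := hW (qA (π a)) (qf (↑q * a)) (q * qf a) (kf (↑q * a)) (kf a) x (t * s) hdeceq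
    rw [h3, map_mul, Subgroup.coe_mul, mul_assoc]
  exact ⟨Equiv.ofBijective Fmap ⟨hinj, hsurj⟩, fun q z s => hprop q z s⟩

end Main

end AmalgAux

/-- Let `F` be a fusion system on a finite group `S`, `K` a strongly `F`-closed subgroup of
`S`, and `Ω'` a left `F|_K`-stable `K`-`K`-biset. Then the `S`-`S`-biset
`Ω = S ×_K Ω' ×_K S` (with the canonical actions) is left `F`-stable. -/
theorem amalg_leftFStable {S : Type*} [Group S] [Finite S]
    (F : FusionSystem S) (K : Subgroup S) (hK : F.StronglyClosed K)
    {Ω' : Type*} (B' : Biset ↥K Ω')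
    (hfree' : ∀ (k : ↥K) (x : Ω'), B'.smul k x = x → k = 1)
    (hstable' : ∀ (Q : Subgroup S) (hQ : Q ≤ K), ∀ φ ∈ F.Hom Q K, ∃ f : Ω' ≃ Ω',
      ∀ (q : ↥Q) (x : Ω') (k : ↥K),
        f (B'.rsmul (B'.smul ⟨↑q, hQ q.2⟩ x) k) = B'.rsmul (B'.smul (φ q) (f x)) k) :
    ∃ B : Biset S (Quot (amalgRel K B')),
      (∀ (u a t : S) (x : Ω'),
          B.smul u (Quot.mk _ (a, x, t)) = Quot.mk _ (u * a, x, t)) ∧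
        (∀ (a t u : S) (x : Ω'),
          B.rsmul (Quot.mk _ (a, x, t)) u = Quot.mk _ (a, x, t * u)) ∧
        B.LeftFStable F := by
  refine ⟨AmalgAux.amalgBiset K B', fun u a t x => rfl, fun a t u x => rfl,
    AmalgAux.amalgBiset_leftFree K B' hfree', fun Q φ hφ => ?_⟩
  exact AmalgAux.stable_equiv F K B' hK hstable' Q φ hφ
end

section
/- Let F be a fusion system on a finite group S, let K be a strongly F-closed subgroup of S, let Ω' be a left F|_K-stable K-K-biset which is bifree as a K-K-biset, and let Ω = S ×_K Ω' ×_K S. Then for every ω ∈ Ω and all s, t ∈ S with s·ω = ω·t, both s and t lie in K; moreover there exist a, b ∈ S and ω₀ ∈ Ω' such that ω is the class of (a, ω₀, b) and the elements k₁ := a⁻¹sa and k₂ := b t b⁻¹ lie in K and satisfy k₁·ω₀ = ω₀·k₂ in Ω'. -/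
section Aux

variable {S : Type*} [Group S] (K : Subgroup S) {Ω' : Type*} (B' : Biset ↥K Ω')

/-- The orbit relation of the `K × K`-action on `S × Ω' × S`. -/
def relR : (S × Ω' × S) → (S × Ω' × S) → Prop := fun p q =>
  ∃ k₁ k₂ : ↥K, q.1 = p.1 * (↑k₁)⁻¹ ∧ q.2.1 = B'.rsmul (B'.smul k₁ p.2.1) k₂ ∧
    q.2.2 = (↑k₂)⁻¹ * p.2.2

lemma relR_refl (p : S × Ω' × S) : relR K B' p p :=
  ⟨1, 1, by simp, by simp [B'.one_smul, B'.rsmul_one], by simp⟩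

lemma relR_symm {p q : S × Ω' × S} (h : relR K B' p q) : relR K B' q p := by
  obtain ⟨k₁, k₂, h1, h2, h3⟩ := h
  refine ⟨k₁⁻¹, k₂⁻¹, ?_, ?_, ?_⟩
  · simp [h1, mul_assoc]
  · rw [h2, ← B'.smul_rsmul, ← B'.mul_smul, inv_mul_cancel, B'.one_smul, ← B'.rsmul_mul,
      mul_inv_cancel, B'.rsmul_one]
  · simp [h3, ← mul_assoc]

lemma relR_trans {p q r : S × Ω' × S} (h : relR K B' p q) (h' : relR K B' q r) :
    relR K B' p r := by
  obtain ⟨k₁, k₂, h1, h2, h3⟩ := h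
  obtain ⟨l₁, l₂, g1, g2, g3⟩ := h'
  refine ⟨l₁ * k₁, k₂ * l₂, ?_, ?_, ?_⟩
  · simp [g1, h1, mul_assoc]
  · rw [g2, h2, B'.mul_smul, B'.rsmul_mul, ← B'.smul_rsmul]
  · simp [g3, h3, mul_assoc]

lemma amalgRel_sub_relR {p q : S × Ω' × S} (h : amalgRel K B' p q) : relR K B' p q := by
  rcases h with ⟨s, t, k, x, rfl, rfl⟩ | ⟨s, t, k, x, rfl, rfl⟩
  · exact ⟨k, 1, by simp [mul_assoc], by simp [B'.rsmul_one], by simp⟩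
  · refine ⟨1, k⁻¹, by simp, ?_, by simp⟩
    rw [B'.one_smul, ← B'.rsmul_mul]
    simp [B'.rsmul_one]

lemma quot_exact {p q : S × Ω' × S}
    (h : Quot.mk (amalgRel K B') p = Quot.mk (amalgRel K B') q) : relR K B' p q := by
  have hg := Quot.eqvGen_exact h
  clear h
  induction hg with
  | rel _ _ h => exact amalgRel_sub_relR K B' h
  | refl _ => exact relR_refl K B' _
  | symm _ _ _ ih => exact relR_symm K B' ih
  | trans _ _ _ _ _ ih1 ih2 => exact relR_trans K B' ih1 ih2

/-- The `S`-`S`-biset `S ×_K Ω' ×_K S`. -/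
def amalgBiset : Biset S (Quot (amalgRel K B')) where
  smul u := Quot.map (fun p => (u * p.1, p.2)) (by
    rintro p q (⟨s, t, k, x, rfl, rfl⟩ | ⟨s, t, k, x, rfl, rfl⟩)
    · exact Or.inl ⟨u * s, t, k, x, by simp [mul_assoc], rfl⟩
    · exact Or.inr ⟨u * s, t, k, x, rfl, rfl⟩)
  rsmul ω u := Quot.map (fun p => (p.1, p.2.1, p.2.2 * u)) (by
    rintro p q (⟨s, t, k, x, rfl, rfl⟩ | ⟨s, t, k, x, rfl, rfl⟩)
    · exact Or.inl ⟨s, t * u, k, x, rfl, rfl⟩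
    · exact Or.inr ⟨s, t * u, k, x, rfl, by simp [mul_assoc]⟩) ω
  one_smul := by
    rintro ⟨⟨a, x, t⟩⟩
    show Quot.mk _ (1 * a, x, t) = Quot.mk _ (a, x, t)
    rw [one_mul]
  mul_smul := by
    rintro s u ⟨⟨a, x, t⟩⟩
    show Quot.mk _ (s * u * a, x, t) = Quot.mk _ (s * (u * a), x, t)
    rw [mul_assoc]
  rsmul_one := by
    rintro ⟨⟨a, x, t⟩⟩
    show Quot.mk _ (a, x, t * 1) = Quot.mk _ (a, x, t)
    rw [mul_one]
  rsmul_mul := by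
    rintro ⟨⟨a, x, t⟩⟩ s u
    show Quot.mk _ (a, x, t * (s * u)) = Quot.mk _ (a, x, t * s * u)
    rw [mul_assoc]
  smul_rsmul := by rintro s ⟨⟨a, x, t⟩⟩ u; rfl

end Aux

/-- Let `F` be a fusion system on a finite group `S`, `K` a strongly `F`-closed subgroup of
`S`, `Ω'` a bifree left `F|_K`-stable `K`-`K`-biset and `Ω = S ×_K Ω' ×_K S`. Then for every
`ω ∈ Ω` and `s, t ∈ S` with `s • ω = ω • t` one has `s ∈ K` and `t ∈ K`; moreover there are
`a, b ∈ S` and `ω₀ ∈ Ω'` with `ω = [(a, ω₀, b)]` such that `k₁ = a⁻¹sa` and `k₂ = btb⁻¹`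
lie in `K` and satisfy `k₁ • ω₀ = ω₀ • k₂` in `Ω'`. -/
theorem amalg_isotropy {S : Type*} [Group S] [Finite S]
    (F : FusionSystem S) (K : Subgroup S) (hK : F.StronglyClosed K)
    {Ω' : Type*} (B' : Biset ↥K Ω')
    (hfree' : ∀ (k : ↥K) (x : Ω'), B'.smul k x = x → k = 1)
    (hrfree' : ∀ (x : Ω') (k : ↥K), B'.rsmul x k = x → k = 1)
    (hstable' : ∀ (Q : Subgroup S) (hQ : Q ≤ K), ∀ φ ∈ F.Hom Q K, ∃ f : Ω' ≃ Ω',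
      ∀ (q : ↥Q) (x : Ω') (k : ↥K),
        f (B'.rsmul (B'.smul ⟨↑q, hQ q.2⟩ x) k) = B'.rsmul (B'.smul (φ q) (f x)) k) :
    ∃ B : Biset S (Quot (amalgRel K B')),
      (∀ (u a t : S) (x : Ω'),
          B.smul u (Quot.mk _ (a, x, t)) = Quot.mk _ (u * a, x, t)) ∧
        (∀ (a t u : S) (x : Ω'),
          B.rsmul (Quot.mk _ (a, x, t)) u = Quot.mk _ (a, x, t * u)) ∧
        ∀ (ω : Quot (amalgRel K B')) (s t : S), B.smul s ω = B.rsmul ω t →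
          s ∈ K ∧ t ∈ K ∧
            ∃ (a b : S) (ω₀ : Ω'), ω = Quot.mk _ (a, ω₀, b) ∧
              ∃ (h₁ : a⁻¹ * s * a ∈ K) (h₂ : b * t * b⁻¹ ∈ K),
                B'.smul ⟨a⁻¹ * s * a, h₁⟩ ω₀ = B'.rsmul ω₀ ⟨b * t * b⁻¹, h₂⟩ := by

  refine ⟨amalgBiset K B', fun u a t x => rfl, fun a t u x => rfl, ?_⟩
  rintro ⟨⟨a, x, b⟩⟩ s t h
  have hR : relR K B' (s * a, x, b) (a, x, b * t) := quot_exact K B' h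
  obtain ⟨k₁, k₂, h1, h2, h3⟩ := hR
  simp only at h1 h2 h3
  have hk1 : (↑k₁ : S) = a⁻¹ * s * a := by
    have key : a * ↑k₁ = s * a := by
      conv_lhs => rw [h1]
      group
    calc (↑k₁ : S) = a⁻¹ * (a * ↑k₁) := by group
      _ = a⁻¹ * (s * a) := by rw [key]
      _ = a⁻¹ * s * a := by group
  have hk2 : ((↑k₂ : S))⁻¹ = b * t * b⁻¹ := by
    calc ((↑k₂ : S))⁻¹ = (↑k₂)⁻¹ * b * b⁻¹ := by group
      _ = b * t * b⁻¹ := by rw [← h3]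
  have h₁ : a⁻¹ * s * a ∈ K := hk1 ▸ k₁.2
  have h₂ : b * t * b⁻¹ ∈ K := hk2 ▸ (k₂⁻¹).2
  have hsK : s ∈ K := by
    have hL : Subgroup.zpowers (a⁻¹ * s * a) ≤ K := Subgroup.zpowers_le.2 h₁
    have hc : ∀ p ∈ Subgroup.zpowers (a⁻¹ * s * a), a * p * a⁻¹ ∈ (⊤ : Subgroup S) :=
      fun _ _ => trivial
    have := hK _ hL _ (F.conj_mem a _ ⊤ hc) ⟨a⁻¹ * s * a, Subgroup.mem_zpowers _⟩
    simpa [conjMap, mul_assoc] using this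
  have htK : t ∈ K := by
    have hL : Subgroup.zpowers (b * t * b⁻¹) ≤ K := Subgroup.zpowers_le.2 h₂
    have hc : ∀ p ∈ Subgroup.zpowers (b * t * b⁻¹), b⁻¹ * p * b⁻¹⁻¹ ∈ (⊤ : Subgroup S) :=
      fun _ _ => trivial
    have := hK _ hL _ (F.conj_mem b⁻¹ _ ⊤ hc) ⟨b * t * b⁻¹, Subgroup.mem_zpowers _⟩
    simpa [conjMap, mul_assoc] using this
  refine ⟨hsK, htK, a, b, x, rfl, h₁, h₂, ?_⟩
  have e1 : (⟨a⁻¹ * s * a, h₁⟩ : ↥K) = k₁ := Subtype.ext hk1.symm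
  have e2 : (⟨b * t * b⁻¹, h₂⟩ : ↥K) = k₂⁻¹ := Subtype.ext (by simp [hk2])
  rw [e1, e2]
  conv_rhs => rw [h2]
  rw [← B'.rsmul_mul, mul_inv_cancel, B'.rsmul_one]
end

section
/- Let K be a finite abelian group whose exponent is squarefree, let L be a subgroup of K and let φ: L → K be an injective group homomorphism. Then there exists an automorphism ψ of K such that ψ(l) = φ(l) for all l ∈ L. -/
open Function Submodule

section Key

variable {R M : Type*} [CommRing R] [AddCommGroup M] [Module R M] [Finite M]

private lemma finite_hom (A B : Type*) [AddCommGroup A] [AddCommGroup B] [Module R A]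
    [Module R B] [Finite A] [Finite B] : Finite (A →ₗ[R] B) :=
  Finite.of_injective _ (DFunLike.coe_injective (F := A →ₗ[R] B))

omit [Finite M] in
private lemma card_hom_mul (S' A B : Submodule R M) (h : IsCompl A B) :
    Nat.card (↥S' →ₗ[R] M) = Nat.card (↥S' →ₗ[R] ↥A) * Nat.card (↥S' →ₗ[R] ↥B) := by
  rw [← Nat.card_prod]
  exact Nat.card_congr
    (((LinearMap.prodEquiv R).toEquiv.trans
      (LinearEquiv.arrowCongr (LinearEquiv.refl R ↥S')
        (Submodule.prodEquivOfIsCompl A B h)).toEquiv)).symm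

private lemma card_lt_of_lt (a b : Submodule R M) (h : a < b) : Nat.card ↥a < Nat.card ↥b := by
  calc Nat.card ↥a = (a : Set M).ncard := Nat.card_coe_set_eq _
    _ < (b : Set M).ncard := Set.ncard_lt_ncard (SetLike.coe_ssubset_coe.mpr h) (Set.toFinite _)
    _ = Nat.card ↥b := (Nat.card_coe_set_eq _).symm

omit [Finite M] in
private lemma card_mul_of_isCompl (A B : Submodule R M) (h : IsCompl A B) :
    Nat.card ↥A * Nat.card ↥B = Nat.card M := by
  rw [← Nat.card_prod]
  exact Nat.card_congr (Submodule.prodEquivOfIsCompl A B h).toEquiv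

variable [IsSemisimpleModule R M]

private lemma key : ∀ (k : ℕ) (p q : Submodule R M), IsCompl p q → Nat.card ↥q = k →
    ∀ φ : ↥p →ₗ[R] M, Injective φ → ∃ e : M ≃ₗ[R] M, ∀ x : ↥p, e ↑x = φ x := by
  intro k
  induction k using Nat.strong_induction_on with
  | _ k ih =>
  intro p q hpq hk φ hφ
  rcases eq_or_ne q ⊥ with rfl | hq
  · -- base case : p = ⊤
    have hp : p = ⊤ := by simpa using hpq.sup_eq_top
    subst hp
    have hinj : Injective (φ ∘ₗ (Submodule.topEquiv (R := R) (M := M)).symm.toLinearMap) := by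
      simpa [LinearMap.coe_comp] using hφ.comp (Submodule.topEquiv (R := R) (M := M)).symm.injective
    have hb := Finite.injective_iff_bijective.mp hinj
    refine ⟨LinearEquiv.ofBijective _ hb, fun x => ?_⟩
    show φ (Submodule.topEquiv.symm ↑x) = φ x
    exact congrArg φ (Subtype.ext rfl)
  · -- inductive step
    obtain ⟨S, hSq, hS⟩ := (IsSemisimpleModule.eq_bot_or_exists_simple_le q).resolve_left hq
    have hSne : S ≠ ⊥ := (isSimpleModule_iff_isAtom.mp hS).1
    have hdisjpS : Disjoint p S := Disjoint.mono_right hSq hpq.disjoint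
    -- a complement t of p ⊔ S
    obtain ⟨t, ht⟩ := exists_isCompl (p ⊔ S)
    -- IsCompl S (p ⊔ t)
    have hmod : (p ⊔ t) ⊓ (p ⊔ S) = p := by
      rw [sup_inf_assoc_of_le t le_sup_left, (disjoint_iff.mp ht.disjoint.symm ), sup_bot_eq]
    have hScompl : IsCompl S (p ⊔ t) := by
      constructor
      · refine disjoint_iff.mpr (le_bot_iff.mp ?_)
        have h1 : S ⊓ (p ⊔ t) ≤ (p ⊔ S) ⊓ (p ⊔ t) := inf_le_inf_right _ (le_sup_right)
        rw [inf_comm (p ⊔ S)] at h1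
        rw [hmod] at h1
        have h2 : S ⊓ (p ⊔ t) ≤ S ⊓ p := le_inf inf_le_left h1
        rwa [disjoint_iff.mp hdisjpS.symm] at h2
      · rw [codisjoint_iff, ← sup_assoc, sup_comm S p]
        exact codisjoint_iff.mp ht.codisjoint
    -- range of φ and its complement
    obtain ⟨C, hC⟩ := exists_isCompl (LinearMap.range φ)
    -- counting: there is a nonzero map S → C
    haveI : ∀ (A B : Submodule R M), Finite (↥A →ₗ[R] ↥B) := fun A B => finite_hom _ _
    haveI : Finite (↥S →ₗ[R] M) := finite_hom _ _
    have hcard1 : Nat.card (↥S →ₗ[R] M)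
        = Nat.card (↥S →ₗ[R] ↥p) * Nat.card (↥S →ₗ[R] ↥q) := card_hom_mul S p q hpq
    have hcard2 : Nat.card (↥S →ₗ[R] M)
        = Nat.card (↥S →ₗ[R] ↥(LinearMap.range φ)) * Nat.card (↥S →ₗ[R] ↥C) :=
      card_hom_mul S _ C hC
    have hcardp : Nat.card (↥S →ₗ[R] ↥p) = Nat.card (↥S →ₗ[R] ↥(LinearMap.range φ)) :=
      Nat.card_congr (LinearEquiv.arrowCongr (LinearEquiv.refl R ↥S)
        (LinearEquiv.ofInjective φ hφ)).toEquiv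
    haveI : Nontrivial ↥S := Submodule.nontrivial_iff_ne_bot.mpr hSne
    have hSS : 2 ≤ Nat.card (↥S →ₗ[R] ↥S) := by
      have : Nontrivial (↥S →ₗ[R] ↥S) := ⟨0, LinearMap.id, fun h => by
        obtain ⟨x, hx⟩ := exists_ne (0 : ↥S)
        exact hx (by simpa using congrArg (fun f => f x) h.symm)⟩
      exact Finite.one_lt_card_iff_nontrivial.mpr this
    have hSq' : Nat.card (↥S →ₗ[R] ↥S) ≤ Nat.card (↥S →ₗ[R] ↥q) := by
      refine Nat.card_le_card_of_injective
        (fun f => (Submodule.inclusion hSq) ∘ₗ f) (fun f g hfg => ?_)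
      ext x
      have h : Submodule.inclusion hSq (f x) = Submodule.inclusion hSq (g x) := by
        exact DFunLike.congr_fun hfg x
      exact congrArg _ (Submodule.inclusion_injective hSq h)
    have hpos : 0 < Nat.card (↥S →ₗ[R] ↥(LinearMap.range φ)) := Nat.card_pos
    have hC2 : 2 ≤ Nat.card (↥S →ₗ[R] ↥C) := by
      nlinarith [hcard1, hcard2, hcardp, hSS, hSq', hpos]
    -- a nonzero map g₀ : S → C, necessarily injective
    haveI : Nontrivial (↥S →ₗ[R] ↥C) := Finite.one_lt_card_iff_nontrivial.mp hC2
    obtain ⟨g₀, hg₀⟩ := exists_ne (0 : ↥S →ₗ[R] ↥C)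
    have hg₀inj : Injective g₀ := g₀.injective_or_eq_zero.resolve_right hg₀
    set g : ↥S →ₗ[R] M := C.subtype ∘ₗ g₀ with hg
    have hginj : Injective g := by
      simpa [hg, LinearMap.coe_comp] using (Subtype.coe_injective).comp hg₀inj
    have hgmem : ∀ s : ↥S, g s ∈ C := fun s => (g₀ s).2
    -- the extension Ψ of φ and g to all of M
    set Φ : M →ₗ[R] M := LinearMap.ofIsCompl hpq φ 0 with hΦ
    set Γ : M →ₗ[R] M := LinearMap.ofIsCompl hScompl g 0 with hΓ
    set Ψ : M →ₗ[R] M := Φ + Γ with hΨ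
    have hΨp : ∀ x : ↥p, Ψ ↑x = φ x := by
      intro x
      have h1 : Φ ↑x = φ x := LinearMap.ofIsCompl_left_apply hpq x
      have h2 : Γ ↑x = 0 := by
        have := LinearMap.ofIsCompl_right_apply (φ := g) (ψ := 0) hScompl
          ⟨(x : M), le_sup_left (a := p) (b := t) x.2⟩
        simpa using this
      simp [hΨ, h1, h2]
    have hΨS : ∀ s : ↥S, Ψ ↑s = g s := by
      intro s
      have h1 : Φ ↑s = 0 := by
        have := LinearMap.ofIsCompl_right_apply (φ := φ) (ψ := 0) hpq ⟨(s : M), hSq s.2⟩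
        simpa using this
      have h2 : Γ ↑s = g s := LinearMap.ofIsCompl_left_apply hScompl s
      simp [hΨ, h1, h2]
    -- injectivity on p ⊔ S
    set φ' : ↥(p ⊔ S) →ₗ[R] M := Ψ ∘ₗ (p ⊔ S).subtype with hφ'
    have hφ'inj : Injective φ' := by
      rw [← LinearMap.ker_eq_bot, eq_bot_iff]
      rintro ⟨z, hz⟩ hker
      obtain ⟨a, ha, s, hs, rfl⟩ := Submodule.mem_sup.mp hz
      have hker' : φ ⟨a, ha⟩ + g ⟨s, hs⟩ = 0 := by
        have : Ψ (a + s) = 0 := hker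
        rwa [map_add, hΨp ⟨a, ha⟩, hΨS ⟨s, hs⟩] at this
      have hmem1 : φ ⟨a, ha⟩ ∈ LinearMap.range φ ⊓ C := by
        refine ⟨LinearMap.mem_range_self _ _, ?_⟩
        have : φ ⟨a, ha⟩ = -(g ⟨s, hs⟩) := by linear_combination (norm := abel) hker'
        rw [this]
        exact neg_mem (hgmem _)
      rw [disjoint_iff.mp hC.disjoint] at hmem1
      have ha0 : φ ⟨a, ha⟩ = 0 := hmem1
      have ha' : (⟨a, ha⟩ : ↥p) = 0 := hφ (by simpa using ha0)
      have hs0 : g ⟨s, hs⟩ = 0 := by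
        have := hker'
        rw [ha0, zero_add] at this
        exact this
      have hs' : (⟨s, hs⟩ : ↥S) = 0 := hginj (by simpa using hs0)
      have h1 : a = 0 := congrArg Subtype.val ha'
      have h2 : s = 0 := congrArg Subtype.val hs'
      show (⟨a + s, hz⟩ : ↥(p ⊔ S)) ∈ (⊥ : Submodule R ↥(p ⊔ S))
      rw [Submodule.mem_bot]
      exact Subtype.ext (show a + s = 0 by rw [h1, h2, add_zero])
    -- strict decrease of the complement's cardinality
    have hplt : p < p ⊔ S := by
      refine lt_of_le_of_ne le_sup_left (fun h => hSne ?_)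
      have hSp : S ≤ p := h ▸ le_sup_right
      have := disjoint_iff.mp (hdisjpS.mono_right (le_refl S))
      exact le_bot_iff.mp (le_trans (le_inf hSp (le_refl S)) (le_of_eq this))
    have hcards1 : Nat.card ↥p * Nat.card ↥q = Nat.card M := card_mul_of_isCompl p q hpq
    have hcards2 : Nat.card ↥(p ⊔ S) * Nat.card ↥t = Nat.card M := card_mul_of_isCompl _ t ht
    have hlt1 : Nat.card ↥p < Nat.card ↥(p ⊔ S) := card_lt_of_lt _ _ hplt
    have htpos : 0 < Nat.card ↥t := Nat.card_pos
    have hqpos : 0 < Nat.card ↥q := Nat.card_pos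
    have hlt : Nat.card ↥t < Nat.card ↥q := by nlinarith
    obtain ⟨e, he⟩ := ih (Nat.card ↥t) (hk ▸ hlt) (p ⊔ S) t ht rfl φ' hφ'inj
    refine ⟨e, fun x => ?_⟩
    have := he ⟨(x : M), le_sup_left (a := p) (b := S) x.2⟩
    simpa [hφ', hΨp x] using this

end Key

private def zmodModuleAux (n : ℕ) [NeZero n] (M : Type*) [AddCommGroup M]
    (h : ∀ x : M, n • x = 0) : Module (ZMod n) M := AddCommMonoid.zmodModule h

/-- Let `K` be a finite abelian group whose exponent is squarefree, `L ≤ K` a subgroup and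
`φ : L → K` an injective homomorphism. Then `φ` extends to an automorphism `ψ` of `K`. -/
theorem extend_to_automorphism {K : Type*} [CommGroup K] [Finite K]
    (hexp : Squarefree (Monoid.exponent K))
    (L : Subgroup K) (φ : ↥L →* K) (hφ : Function.Injective φ) :
    ∃ ψ : K ≃* K, ∀ l : ↥L, ψ ↑l = φ l := by
  set n := Monoid.exponent K with hn
  haveI : NeZero n := ⟨hexp.ne_zero⟩
  letI : Module (ZMod n) (Additive K) := zmodModuleAux n (Additive K) (fun x =>
    Additive.toMul.injective (by
      simp only [toMul_nsmul, toMul_zero]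
      exact Monoid.pow_exponent_eq_one x.toMul))
  haveI : IsReduced (ZMod n) := isReduced_zmod.mpr (Or.inl hexp)
  haveI : IsSemisimpleRing (ZMod n) := IsArtinianRing.isSemisimpleRing_of_isReduced (ZMod n)
  let p : Submodule (ZMod n) (Additive K) :=
    AddSubgroup.toZModSubmodule n (Subgroup.toAddSubgroup L)
  let f : ↥p →+ Additive K := AddMonoidHom.mk'
    (fun x => Additive.ofMul (φ ⟨Additive.toMul x.1, x.2⟩))
    (fun x y => congrArg Additive.ofMul (map_mul φ ⟨Additive.toMul x.1, x.2⟩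
      ⟨Additive.toMul y.1, y.2⟩))
  let φₗ : ↥p →ₗ[ZMod n] Additive K := f.toZModLinearMap n
  have hφₗ : Function.Injective φₗ := by
    intro x y h
    have h' : φ ⟨Additive.toMul x.1, x.2⟩ = φ ⟨Additive.toMul y.1, y.2⟩ :=
      Additive.ofMul.injective h
    have := hφ h'
    exact Subtype.ext (congrArg Subtype.val this)
  obtain ⟨q, hq⟩ := exists_isCompl p
  obtain ⟨e, he⟩ := key (Nat.card ↥q) p q hq rfl φₗ hφₗ
  refine ⟨{ toFun := fun k => Additive.toMul (e (Additive.ofMul k)),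
            invFun := fun k => Additive.toMul (e.symm (Additive.ofMul k)),
            left_inv := fun k => by simp,
            right_inv := fun k => by simp,
            map_mul' := fun a b => by
              show Additive.toMul (e (Additive.ofMul a + Additive.ofMul b)) = _
              rw [map_add]
              rfl }, fun l => ?_⟩
  have hl : Additive.ofMul (l : K) ∈ p := l.2
  have h := he ⟨Additive.ofMul (l : K), hl⟩
  show Additive.toMul (e (Additive.ofMul (l : K))) = φ l
  rw [h]
  show φ ⟨(l : K), _⟩ = φ l
  congr 1
end

section
/- Let F be a fusion system on a finite group S such that every morphism of F extends to an F-automorphism of S, i.e., for every subgroup L ≤ S and every φ ∈ Hom_F(L,S) there exists ψ ∈ Aut_F(S) := Hom_F(S,S) with ψ|_L = φ. For each ψ ∈ Aut_F(S), let S_ψ denote the S-S-biset with underlying set S, left action by left multiplication and right action x·s := x ψ(s). Then the disjoint union Ω = ⊔_{ψ ∈ Aut_F(S)} S_ψ is a left F-stable S-S-biset. -/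
/-- Let `F` be a fusion system on a finite group `S` in which every morphism extends to an
`F`-automorphism of `S`. Then the disjoint union `Ω = ⊔_{ψ ∈ Aut_F(S)} S_ψ` (where `S_ψ` is
`S` with left action by left multiplication and right action `x • s = x ψ(s)`) is a left
`F`-stable `S`-`S`-biset. -/
theorem autUnion_leftFStable {S : Type*} [Group S] [Finite S] (F : FusionSystem S)
    (hext : ∀ (L : Subgroup S), ∀ φ ∈ F.Hom L ⊤, ∃ ψ ∈ F.Hom ⊤ ⊤,
      ∀ l : ↥L, ψ ⟨↑l, Subgroup.mem_top (↑l : S)⟩ = φ l) :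
    ∃ B : Biset S (↥(F.Hom ⊤ ⊤) × S),
      (∀ (u : S) (p : ↥(F.Hom ⊤ ⊤) × S), B.smul u p = (p.1, u * p.2)) ∧
        (∀ (p : ↥(F.Hom ⊤ ⊤) × S) (s : S),
          B.rsmul p s = (p.1, p.2 * ↑(p.1.1 ⟨s, Subgroup.mem_top s⟩))) ∧
        B.LeftFStable F := by
  classical
  refine ⟨{ smul := fun u p => (p.1, u * p.2)
            rsmul := fun p s => (p.1, p.2 * ↑(p.1.1 ⟨s, Subgroup.mem_top s⟩))
            one_smul := by intro x; simp
            mul_smul := by intro s t x; simp [mul_assoc]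
            rsmul_one := by
              intro x
              have h1 : (⟨(1 : S), Subgroup.mem_top 1⟩ : ↥(⊤ : Subgroup S)) = 1 := rfl
              simp [h1]
            rsmul_mul := by
              intro x s t
              have h : (⟨s * t, Subgroup.mem_top (s*t)⟩ : ↥(⊤ : Subgroup S)) =
                  ⟨s, Subgroup.mem_top s⟩ * ⟨t, Subgroup.mem_top t⟩ := rfl
              refine Prod.ext rfl ?_
              dsimp only
              rw [h, map_mul, Subgroup.coe_mul, mul_assoc]
            smul_rsmul := by intro s x t; simp [mul_assoc] }, fun u p => rfl,
        fun p s => rfl, ?_, ?_⟩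
  · intro s x h
    have := congrArg Prod.snd h
    simpa using this
  · intro Q φ hφ
    obtain ⟨ψ, hψ, hψφ⟩ := hext Q φ hφ
    have hψinj : Function.Injective ψ := F.injective hψ
    haveI : Finite (↥(⊤ : Subgroup S) →* ↥(⊤ : Subgroup S)) :=
      Finite.of_injective (fun f => (f : ↥(⊤ : Subgroup S) → ↥(⊤ : Subgroup S)))
        DFunLike.coe_injective
    set g : ↥(F.Hom ⊤ ⊤) × S → ↥(F.Hom ⊤ ⊤) × S :=
      fun p => (⟨ψ.comp p.1.1, F.comp_mem p.1.2 hψ⟩, ↑(ψ ⟨p.2, Subgroup.mem_top p.2⟩))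
      with hg
    have hginj : Function.Injective g := by
      intro ⟨χ₁, x₁⟩ ⟨χ₂, x₂⟩ h
      have h1 := congrArg Prod.fst h
      have h2 := congrArg Prod.snd h
      simp only [hg, Subtype.mk.injEq] at h1 h2
      refine Prod.ext ?_ ?_
      · exact Subtype.ext (by
          ext a
          have := congrArg (fun f => (f : ↥(⊤:Subgroup S) →* ↥(⊤:Subgroup S)) a) h1
          exact congrArg _ (hψinj this))
      · have : (⟨x₁, Subgroup.mem_top x₁⟩ : ↥(⊤:Subgroup S)) = ⟨x₂, Subgroup.mem_top x₂⟩ :=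
          hψinj (Subtype.ext h2)
        simpa using congrArg Subtype.val this
    have hgbij : Function.Bijective g := Finite.injective_iff_bijective.mp hginj
    refine ⟨Equiv.ofBijective g hgbij, ?_⟩
    intro q x s
    show g _ = _
    rcases x with ⟨χ, x⟩
    simp only [hg]
    refine Prod.ext rfl ?_
    dsimp only
    have hmul : ∀ a b : S, (⟨a * b, Subgroup.mem_top (a*b)⟩ : ↥(⊤:Subgroup S)) =
        ⟨a, Subgroup.mem_top a⟩ * ⟨b, Subgroup.mem_top b⟩ := fun a b => rfl
    have hq : (↑(ψ ⟨↑q, Subgroup.mem_top (↑q : S)⟩) : S) = ↑(φ q) := by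
      rw [hψφ q]
    have hχ : (⟨(↑(χ.1 ⟨s, Subgroup.mem_top s⟩) : S),
        Subgroup.mem_top _⟩ : ↥(⊤:Subgroup S)) = χ.1 ⟨s, Subgroup.mem_top s⟩ :=
      Subtype.ext rfl
    rw [hmul, hmul, map_mul, map_mul, hχ]
    push_cast
    rw [hq]
    rfl
end

section
/- Let K be a finite abelian group whose exponent is squarefree. For each automorphism ψ of K, let K_ψ denote the K-K-biset with underlying set K, left action by left multiplication and right action x·k := x ψ(k). Then the disjoint union Ω' = ⊔_{ψ ∈ Aut(K)} K_ψ is left F-stable for the largest fusion system F on K; explicitly, for every subgroup L ≤ K and every injective group homomorphism φ: L → K, the L-K-bisets _LΩ' and _φΩ' are isomorphic. -/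
section Aux

variable {K : Type*} [CommGroup K]

/-- If `x ^ p = 1` for a prime `p`, then for any integer `i`, either `x ^ i = 1` or
`x` is a power of `x ^ i`. -/
lemma pow_prime_cases {p : ℕ} (hp : p.Prime) (x : K) (hx : x ^ p = 1) (i : ℤ) :
    x ^ i = 1 ∨ ∃ a : ℤ, (x ^ i) ^ a = x := by
  by_cases hdvd : (p : ℤ) ∣ i
  · obtain ⟨c, rfl⟩ := hdvd
    left
    rw [zpow_mul, zpow_natCast, hx, one_zpow]
  · right
    have hcop : IsCoprime (p : ℤ) i :=
      (Prime.coprime_iff_not_dvd (Nat.prime_iff_prime_int.1 hp)).2 hdvd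
    obtain ⟨a, b, hab⟩ := hcop
    refine ⟨b, ?_⟩
    have : x = x ^ (a * p + b * i) := by rw [hab, zpow_one]
    conv_rhs => rw [this]
    rw [zpow_add, mul_comm a (p:ℤ), zpow_mul, zpow_natCast, hx, one_zpow, one_mul,
      mul_comm b i, zpow_mul]

lemma sub_card_lt {K : Type*} [Group K] [Finite K] {L L' : Subgroup K} (h : L < L') :
    Nat.card L < Nat.card L' := by
  have : (L : Set K) ⊂ (L' : Set K) := by
    rw [Set.ssubset_def]
    exact ⟨h.le, fun hc => h.ne (le_antisymm h.le hc)⟩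
  exact Set.Finite.card_lt_card (Set.toFinite _) this

end Aux

section Step

variable {K : Type*} [CommGroup K] [Finite K]

/-- If `L` is a proper subgroup of a finite abelian group of squarefree exponent, there is
an element outside `L` whose `p`-th power is `1` for some prime `p`. -/
lemma exists_prime_order_not_mem (hexp : Squarefree (Monoid.exponent K))
    {L : Subgroup K} (hL : L ≠ ⊤) :
    ∃ (p : ℕ) (h' : K), p.Prime ∧ h' ∉ L ∧ h' ^ p = 1 := by
  obtain ⟨g, hg⟩ : ∃ g : K, g ∉ L := by
    by_contra hc
    push_neg at hc
    exact hL (Subgroup.eq_top_iff' L |>.2 hc)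
  -- pass to quotient
  let gb : K ⧸ L := QuotientGroup.mk g
  have hgb : gb ≠ 1 := fun h => hg ((QuotientGroup.eq_one_iff g).1 h)
  have hm1 : 1 < orderOf gb := by
    have : orderOf gb ≠ 1 := fun h => hgb (orderOf_eq_one_iff.1 h)
    have : orderOf gb ≠ 0 := by
      have := (orderOf_pos gb).ne'
      omega
    omega
  set m := orderOf gb with hm
  set p := m.minFac with hp
  have hpp : p.Prime := Nat.minFac_prime hm1.ne'
  have hpd : p ∣ m := Nat.minFac_dvd m
  refine ⟨p, ?_⟩
  set hK : K := g ^ (m / p) with hhK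
  have hmkpow : (QuotientGroup.mk hK : K ⧸ L) = gb ^ (m / p) := by
    simp [hhK, gb, QuotientGroup.mk_pow]
  have hne1 : (QuotientGroup.mk hK : K ⧸ L) ≠ 1 := by
    rw [hmkpow]
    intro hc
    have hdvd := orderOf_dvd_of_pow_eq_one hc
    rw [← hm] at hdvd
    have h1 : 0 < m / p := Nat.div_pos (Nat.le_of_dvd (by omega) hpd) hpp.pos
    have h2 : m / p < m := Nat.div_lt_self (by omega) hpp.one_lt
    have := Nat.le_of_dvd h1 hdvd
    omega
  have hKnotmem : hK ∉ L := fun hc => hne1 ((QuotientGroup.eq_one_iff hK).2 hc)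
  have hmkp : (QuotientGroup.mk hK : K ⧸ L) ^ p = 1 := by
    rw [hmkpow, ← pow_mul, Nat.div_mul_cancel hpd, hm, pow_orderOf_eq_one]
  have hKpmem : hK ^ p ∈ L := by
    rw [← QuotientGroup.eq_one_iff, QuotientGroup.mk_pow]
    exact hmkp
  -- order of hK
  set q := orderOf hK with hq
  have hqsf : Squarefree q := Squarefree.squarefree_of_dvd (Monoid.order_dvd_exponent hK) hexp
  have hpq : p ∣ q := by
    have h1 : orderOf (QuotientGroup.mk hK : K ⧸ L) ∣ p := orderOf_dvd_of_pow_eq_one hmkp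
    have h2 : orderOf (QuotientGroup.mk hK : K ⧸ L) ≠ 1 := fun h => hne1 (orderOf_eq_one_iff.1 h)
    have h3 : orderOf (QuotientGroup.mk hK : K ⧸ L) = p :=
      ((Nat.Prime.eq_one_or_self_of_dvd hpp _ h1).resolve_left h2)
    calc p = orderOf (QuotientGroup.mk hK : K ⧸ L) := h3.symm
    _ ∣ orderOf hK := orderOf_map_dvd (QuotientGroup.mk' L) hK
  set s := q / p with hs
  have hqps : q = p * s := (Nat.mul_div_cancel' hpq).symm
  have hps : ¬ p ∣ s := by
    intro hc
    have : p * p ∣ q := by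
      rw [hqps]
      exact mul_dvd_mul_left p hc
    exact hpp.one_lt.ne' (Nat.isUnit_iff.1 (hqsf p this))
  have hcop : IsCoprime (p : ℤ) (s : ℤ) :=
    Nat.isCoprime_iff_coprime.2 ((Nat.Prime.coprime_iff_not_dvd hpp).2 hps)
  obtain ⟨u, v, huv⟩ := hcop
  refine ⟨hK ^ ((v * s : ℤ)), hpp, ?_, ?_⟩
  · intro hc
    have hdecomp : hK = hK ^ ((u * p : ℤ)) * hK ^ ((v * s : ℤ)) := by
      rw [← zpow_add, huv, zpow_one]
    have h1 : hK ^ ((u * p : ℤ)) ∈ L := by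
      rw [mul_comm u (p:ℤ), zpow_mul, zpow_natCast]
      exact Subgroup.zpow_mem L hKpmem u
    exact hKnotmem (hdecomp ▸ Subgroup.mul_mem L h1 hc)
  · rw [← zpow_natCast, ← zpow_mul, mul_assoc, ← Int.natCast_mul, mul_comm s p, ← hqps,
      mul_comm v (q:ℤ), zpow_mul, zpow_natCast, pow_orderOf_eq_one, one_zpow]

lemma exists_prime_order_not_in_range {p : ℕ} (_hp : p.Prime) {L : Subgroup K}
    (φ : ↥L →* K) (hφ : Function.Injective φ)
    {h' : K} (h'L : h' ∉ L) (h'p : h' ^ p = 1) :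
    ∃ g' : K, g' ^ p = 1 ∧ g' ∉ Set.range φ := by
  by_contra hc
  push_neg at hc
  set X := {x : K // x ^ p = 1} with hX
  set Y := {l : ↥L // l ^ p = 1} with hY
  let e : Y → X := fun l => ⟨φ l.1, by rw [← map_pow, l.2, map_one]⟩
  have he : Function.Bijective e := by
    constructor
    · intro a b hab
      exact Subtype.ext (hφ (congrArg Subtype.val hab))
    · rintro ⟨x, hx⟩
      obtain ⟨l, hl⟩ := hc x hx
      have hlp : l ^ p = 1 := by
        apply hφ
        rw [map_pow, hl, hx, map_one]
      exact ⟨⟨l, hlp⟩, Subtype.ext hl⟩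
  let j : Y → X := fun l => ⟨(l.1 : K), by
    have := l.2
    exact_mod_cast congrArg (Subtype.val) this⟩
  have hj : Function.Injective j := by
    intro a b hab
    have h2 : ((a.1 : ↥L) : K) = ((b.1 : ↥L) : K) := congrArg (fun x : X => (x.1 : K)) hab
    exact Subtype.ext (Subtype.ext h2)
  have hsurj : Function.Surjective (j ∘ (Equiv.ofBijective e he).symm) :=
    Finite.injective_iff_surjective.1 (hj.comp (Equiv.ofBijective e he).symm.injective)
  obtain ⟨y, hy⟩ := hsurj ⟨h', h'p⟩
  apply h'L
  have : ((((Equiv.ofBijective e he).symm y).1 : ↥L) : K) = h' := congrArg Subtype.val hy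
  rw [← this]
  exact ((Equiv.ofBijective e he).symm y).1.2

lemma extension_step (hexp : Squarefree (Monoid.exponent K)) {L : Subgroup K}
    (φ : ↥L →* K) (hφ : Function.Injective φ) (hL : L ≠ ⊤) :
    ∃ (L' : Subgroup K) (φ' : ↥L' →* K), L < L' ∧ Function.Injective φ' ∧
      ∀ (x : K) (hx : x ∈ L) (hx' : x ∈ L'), φ' ⟨x, hx'⟩ = φ ⟨x, hx⟩ := by
  obtain ⟨p, h', hpp, h'L, h'p⟩ := exists_prime_order_not_mem hexp hL
  obtain ⟨g', g'p, g'r⟩ := exists_prime_order_not_in_range hpp φ hφ h'L h'p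
  have h'ne : h' ≠ 1 := fun hc => h'L (hc ▸ L.one_mem)
  have g'ne : g' ≠ 1 := fun hc => g'r ⟨1, by rw [map_one, hc]⟩
  have h'ord : orderOf h' = p :=
    ((hpp.eq_one_or_self_of_dvd _ (orderOf_dvd_of_pow_eq_one h'p)).resolve_left
      (fun hc => h'ne (orderOf_eq_one_iff.1 hc)))
  have g'ord : orderOf g' = p :=
    ((hpp.eq_one_or_self_of_dvd _ (orderOf_dvd_of_pow_eq_one g'p)).resolve_left
      (fun hc => g'ne (orderOf_eq_one_iff.1 hc)))
  set L' : Subgroup K := L ⊔ Subgroup.zpowers h' with hL'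
  have hLle : L ≤ L' := le_sup_left
  have h'mem : h' ∈ L' := Subgroup.mem_sup_right (Subgroup.mem_zpowers h')
  have hlt : L < L' := lt_of_le_of_ne hLle (fun hc => h'L (hc ▸ h'mem))
  -- representation
  have hrep : ∀ x : ↥L', ∃ li : ↥L × ℤ, (x : K) = li.1 * h' ^ li.2 := by
    rintro ⟨x, hx⟩
    rw [hL', Subgroup.mem_sup] at hx
    obtain ⟨y, hy, z, hz, hyz⟩ := hx
    obtain ⟨k, hk⟩ := Subgroup.mem_zpowers_iff.1 hz
    exact ⟨(⟨y, hy⟩, k), by simp [← hyz, hk]⟩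
  -- uniqueness
  have uniq : ∀ (l₁ l₂ : ↥L) (i j : ℤ), (l₁ : K) * h' ^ i = (l₂ : K) * h' ^ j →
      φ l₁ * g' ^ i = φ l₂ * g' ^ j := by
    intro l₁ l₂ i j hij
    have hmem : h' ^ (i - j) ∈ L := by
      have key : h' ^ (i - j) = (l₁ : K)⁻¹ * (l₂ : K) := by
        have h2 : (l₁ : K) * (h' ^ (i - j) * h' ^ j) =
            (l₁ : K) * (((l₁ : K)⁻¹ * (l₂ : K)) * h' ^ j) := by
          rw [← zpow_add, sub_add_cancel, hij]
          group
        exact mul_right_cancel (mul_left_cancel h2)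
      rw [key]
      exact L.mul_mem (L.inv_mem l₁.2) l₂.2
    have hone : h' ^ (i - j) = 1 := by
      rcases pow_prime_cases hpp h' h'p (i - j) with h1 | ⟨a, ha⟩
      · exact h1
      · exact absurd (ha ▸ L.zpow_mem hmem a) h'L
    have hdvd : (p : ℤ) ∣ i - j := by
      rw [← h'ord]
      exact orderOf_dvd_iff_zpow_eq_one.2 hone
    have hg : g' ^ (i - j) = 1 := by
      obtain ⟨c, hc⟩ := hdvd
      rw [hc, zpow_mul, zpow_natCast, g'p, one_zpow]
    have hll : l₁ = l₂ := by
      apply Subtype.ext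
      have hh : h' ^ i = h' ^ j := by
        have := hone
        rw [zpow_sub] at this
        exact (mul_inv_eq_one.1 this)
      have := hij
      rw [hh] at this
      exact mul_right_cancel this
    have hgg : g' ^ i = g' ^ j := by
      have := hg
      rw [zpow_sub] at this
      exact (mul_inv_eq_one.1 this)
    rw [hll, hgg]
  classical
  set F : ↥L' → K := fun x =>
    φ (Classical.choose (hrep x)).1 * g' ^ (Classical.choose (hrep x)).2 with hF
  have spec : ∀ (x : ↥L') (l : ↥L) (i : ℤ), (x : K) = l * h' ^ i → F x = φ l * g' ^ i := by
    intro x l i hx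
    exact uniq _ _ _ _ (by rw [← Classical.choose_spec (hrep x), hx])
  have hmul : ∀ x y : ↥L', F (x * y) = F x * F y := by
    intro x y
    obtain ⟨⟨lx, ix⟩, hx⟩ := hrep x
    obtain ⟨⟨ly, iy⟩, hy⟩ := hrep y
    have hxy : ((x * y : ↥L') : K) = ((lx * ly : ↥L) : K) * h' ^ (ix + iy) := by
      push_cast
      rw [hx, hy, zpow_add]
      exact mul_mul_mul_comm _ _ _ _
    rw [spec _ _ _ hxy, spec _ _ _ hx, spec _ _ _ hy, map_mul, zpow_add]
    exact mul_mul_mul_comm _ _ _ _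
  set φ' : ↥L' →* K := MonoidHom.mk' F hmul with hφ'
  have hinj : Function.Injective φ' := by
    rw [← MonoidHom.ker_eq_bot_iff]
    rw [eq_bot_iff]
    intro x hx
    have hx1 : F x = 1 := hx
    obtain ⟨⟨l, i⟩, hrx⟩ := hrep x
    rw [spec _ _ _ hrx] at hx1
    have hginv : g' ^ i = (φ l)⁻¹ := by
      rw [eq_inv_iff_mul_eq_one, mul_comm]
      exact hx1
    have hgi : g' ^ i = 1 := by
      rcases pow_prime_cases hpp g' g'p i with h1 | ⟨a, ha⟩
      · exact h1
      · exfalso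
        apply g'r
        refine ⟨(l⁻¹) ^ a, ?_⟩
        rw [map_zpow, map_inv, ← hginv]
        exact ha
    have hphil : φ l = 1 := by
      rw [hgi] at hginv
      rw [← inv_inv (φ l), ← hginv, inv_one]
    have hl1 : l = 1 := hφ (by rw [hphil, map_one])
    have hpi : (p : ℤ) ∣ i := by
      rw [← g'ord]
      exact orderOf_dvd_iff_zpow_eq_one.2 hgi
    have hhi : h' ^ i = 1 := by
      obtain ⟨c, hc⟩ := hpi
      rw [hc, zpow_mul, zpow_natCast, h'p, one_zpow]
    have : (x : K) = 1 := by rw [hrx, hl1, hhi]; simp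
    exact Subgroup.mem_bot.2 (Subtype.ext this)
  refine ⟨L', φ', hlt, hinj, ?_⟩
  intro x hxL hxL'
  have : ((⟨x, hxL'⟩ : ↥L') : K) = ((⟨x, hxL⟩ : ↥L) : K) * h' ^ (0 : ℤ) := by simp
  have hspec := spec _ _ _ this
  exact (by simpa using hspec : F ⟨x, hxL'⟩ = φ ⟨x, hxL⟩)

lemma extension_top (φ : ↥(⊤ : Subgroup K) →* K) (hφ : Function.Injective φ) :
    ∃ Φ : K ≃* K, ∀ l : ↥(⊤ : Subgroup K), Φ ↑l = φ l := by
  let ψ : K →* K := φ.comp (Subgroup.topEquiv (G := K)).symm.toMonoidHom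
  have hinj : Function.Injective ψ := hφ.comp (Subgroup.topEquiv (G := K)).symm.injective
  have hbij : Function.Bijective ψ := Finite.injective_iff_bijective.1 hinj
  refine ⟨MulEquiv.ofBijective ψ hbij, fun l => ?_⟩
  show φ _ = φ l
  congr 1

lemma extension (hexp : Squarefree (Monoid.exponent K)) (L : Subgroup K) (φ : ↥L →* K)
    (hφ : Function.Injective φ) : ∃ Φ : K ≃* K, ∀ l : ↥L, Φ ↑l = φ l := by
  have main : ∀ (n : ℕ) (L : Subgroup K) (φ : ↥L →* K), Function.Injective φ →
      Nat.card K - Nat.card L ≤ n → ∃ Φ : K ≃* K, ∀ l : ↥L, Φ ↑l = φ l := by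
    intro n
    induction n with
    | zero =>
      intro L φ hφ hcard
      by_cases hT : L = ⊤
      · subst hT
        exact extension_top φ hφ
      · exfalso
        have h1 : Nat.card ↥L < Nat.card ↥(⊤ : Subgroup K) :=
          sub_card_lt (lt_top_iff_ne_top.2 hT)
        have h2 : Nat.card ↥(⊤ : Subgroup K) = Nat.card K := Subgroup.card_top
        omega
    | succ n ih =>
      intro L φ hφ hcard
      by_cases hT : L = ⊤
      · subst hT
        exact extension_top φ hφ
      · obtain ⟨L', φ', hlt, hinj', hext⟩ := extension_step hexp φ hφ hT
        have h1 : Nat.card ↥L < Nat.card ↥L' := sub_card_lt hlt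
        have h2 : Nat.card ↥L' ≤ Nat.card K :=
          Nat.card_le_card_of_injective (fun x : ↥L' => (x : K)) Subtype.val_injective
        obtain ⟨Φ, hΦ⟩ := ih L' φ' hinj' (by omega)
        refine ⟨Φ, fun l => ?_⟩
        have hmem : (l : K) ∈ L' := hlt.le l.2
        have := hΦ ⟨(l : K), hmem⟩
        rw [this, hext (l : K) l.2 hmem]
  exact main (Nat.card K - Nat.card L) L φ hφ le_rfl

end Step


/-- Let `K` be a finite abelian group with squarefree exponent. The disjoint union
`Ω' = ⊔_{ψ ∈ Aut(K)} K_ψ` (where `K_ψ` is `K` with left action by left multiplication and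
right action `x • k = x ψ(k)`) is left `F`-stable for the largest fusion system on `K`:
for every `L ≤ K` and injective `φ : L → K`, the `L`-`K`-bisets `_LΩ'` and `_φΩ'` are
isomorphic. -/
theorem autUnion_leftStable_abelian {K : Type*} [CommGroup K] [Finite K]
    (hexp : Squarefree (Monoid.exponent K)) :
    ∃ B : Biset K ((K ≃* K) × K),
      (∀ (g : K) (p : (K ≃* K) × K), B.smul g p = (p.1, g * p.2)) ∧
        (∀ (p : (K ≃* K) × K) (k : K), B.rsmul p k = (p.1, p.2 * p.1 k)) ∧
        ∀ (L : Subgroup K) (φ : ↥L →* K), Function.Injective φ →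
          ∃ f : ((K ≃* K) × K) ≃ ((K ≃* K) × K),
            ∀ (l : ↥L) (x : (K ≃* K) × K) (k : K),
              f (B.rsmul (B.smul ↑l x) k) = B.rsmul (B.smul (φ l) (f x)) k := by
  refine ⟨⟨fun g p => (p.1, g * p.2), fun p k => (p.1, p.2 * p.1 k),
    fun x => by simp, fun s t x => by simp [mul_assoc],
    fun x => by simp, fun x s t => by simp [map_mul, mul_assoc],
    fun s x t => by simp [mul_assoc]⟩, fun g p => rfl, fun p k => rfl, ?_⟩
  intro L φ hφ
  obtain ⟨Φ, hΦ⟩ := extension hexp L φ hφ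
  let eAut : (K ≃* K) ≃ (K ≃* K) :=
    ⟨fun ψ => ψ.trans Φ, fun ψ => ψ.trans Φ.symm,
      fun ψ => by ext z; simp, fun ψ => by ext z; simp⟩
  refine ⟨Equiv.prodCongr eAut Φ.toEquiv, ?_⟩
  intro l x k
  refine Prod.ext ?_ ?_
  · rfl
  · show Φ ((↑l * x.2) * x.1 k) = (φ l) * (Φ x.2) * (x.1.trans Φ) k
    rw [map_mul, map_mul, hΦ l]
    rfl
end
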